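/- There is a constant C such that for all ε ∈ (0,1] and all t ∈ ℝ with 0 < |t| ≤ 1, one has ∫_{‖x‖ ≤ 1} (|t|^{1/2} + ‖x‖ + ε)^{-3} (‖x‖ + ε)^{-1} dx ≤ C (|t|^{1/2} + ε)^{-1}, where the integral is over x ∈ ℝ³. Consequently ∫_{−ε²}^{1} ∫_{‖x‖≤1} (|t|^{1/2}+‖x‖+ε)^{-3} (‖x‖+ε)^{-1} dx dt ≤ C' for a universal constant C'. -/

import Mathlib

open MeasureTheory Metric Set

noncomputable def V3 : ℝ := (volume (Metric.ball (0 : EuclideanSpace ℝ (Fin 3)) 1)).toReal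

lemma V3_pos : 0 < V3 :=
  ENNReal.toReal_pos (measure_ball_pos volume _ one_pos).ne' measure_ball_lt_top.ne

lemma integral_Ioi_inv_sq_shift {a : ℝ} (ha : 0 < a) :
    IntegrableOn (fun y : ℝ => ((a + y) ^ 2)⁻¹) (Ioi 0) volume ∧
      ∫ y in Ioi (0:ℝ), ((a + y) ^ 2)⁻¹ = a⁻¹ := by
  have hderiv : ∀ y ∈ Ici (0:ℝ), HasDerivAt (fun y : ℝ => -(a + y)⁻¹) (((a + y) ^ 2)⁻¹) y := by
    intro y hy
    have hy0 : (0:ℝ) ≤ y := hy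
    have hay : a + y ≠ 0 := by nlinarith
    have h1 : HasDerivAt (fun y : ℝ => a + y) 1 y := (hasDerivAt_id y).const_add a
    have h2 := (h1.inv hay).neg
    exact h2.congr_deriv (by ring)
  have hpos : ∀ y ∈ Ioi (0:ℝ), (0:ℝ) ≤ ((a + y) ^ 2)⁻¹ := by
    intro y hy
    have : (0:ℝ) < y := hy
    positivity
  have htend : Filter.Tendsto (fun y : ℝ => -(a + y)⁻¹) Filter.atTop (nhds 0) := by
    rw [← neg_zero]
    exact ((Filter.tendsto_atTop_add_const_left _ a Filter.tendsto_id).inv_tendsto_atTop).neg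
  refine ⟨integrableOn_Ioi_deriv_of_nonneg' hderiv hpos htend, ?_⟩
  rw [integral_Ioi_of_hasDerivAt_of_nonneg' hderiv hpos htend]
  simp

lemma spatial (s ε : ℝ) (hs : 0 ≤ s) (hε : 0 < ε) (hε1 : ε ≤ 1) :
    (∫ x in Metric.closedBall (0 : EuclideanSpace ℝ (Fin 3)) 1,
        1 / ((s + ‖x‖ + ε) ^ 3 * (‖x‖ + ε)))
      ≤ 3 * V3 * (s + ε)⁻¹ := by
  have haε : 0 < s + ε := by linarith
  set F : ℝ → ℝ := fun r => 1 / ((s + r + ε) ^ 3 * (r + ε)) with hFdef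
  show (∫ x in Metric.closedBall (0 : EuclideanSpace ℝ (Fin 3)) 1, F ‖x‖)
      ≤ 3 * V3 * (s + ε)⁻¹
  have hg_cont : Continuous (fun x : EuclideanSpace ℝ (Fin 3) => F ‖x‖) := by
    show Continuous (fun x : EuclideanSpace ℝ (Fin 3) =>
      1 / ((s + ‖x‖ + ε) ^ 3 * (‖x‖ + ε)))
    refine continuous_const.div (by fun_prop) ?_
    intro x
    have h1 : (0:ℝ) < s + ‖x‖ + ε := by have := norm_nonneg x; linarith
    have h2 : (0:ℝ) < ‖x‖ + ε := by have := norm_nonneg x; linarith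
    exact ne_of_gt (mul_pos (pow_pos h1 3) h2)
  have hnonneg : ∀ x : EuclideanSpace ℝ (Fin 3), 0 ≤ F ‖x‖ := by
    intro x
    have h1 : (0:ℝ) < s + ‖x‖ + ε := by have := norm_nonneg x; linarith
    have h2 : (0:ℝ) < ‖x‖ + ε := by have := norm_nonneg x; linarith
    exact le_of_lt (div_pos one_pos (mul_pos (pow_pos h1 3) h2))
  have hfr : ((Module.finrank ℝ (EuclideanSpace ℝ (Fin 3)) : ℝ)) < 4 := by
    simp [finrank_euclideanSpace]
    norm_num
  have hmaj : Integrable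
      (fun x : EuclideanSpace ℝ (Fin 3) => (ε ^ 4)⁻¹ * (1 + ‖x‖) ^ (-(4:ℝ))) volume :=
    (integrable_one_add_norm hfr).const_mul _
  have hbound : ∀ x : EuclideanSpace ℝ (Fin 3),
      ‖F ‖x‖‖ ≤ (ε ^ 4)⁻¹ * (1 + ‖x‖) ^ (-(4:ℝ)) := by
    intro x
    have hr0 : (0:ℝ) ≤ ‖x‖ := norm_nonneg x
    have key1 : ε * (1 + ‖x‖) ≤ s + ‖x‖ + ε := by nlinarith
    have key2 : ε * (1 + ‖x‖) ≤ ‖x‖ + ε := by nlinarith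
    have hden : ε ^ 4 * (1 + ‖x‖) ^ 4 ≤ (s + ‖x‖ + ε) ^ 3 * (‖x‖ + ε) := by
      have h3 : (ε * (1 + ‖x‖)) ^ 3 ≤ (s + ‖x‖ + ε) ^ 3 :=
        pow_le_pow_left₀ (by positivity) key1 3
      calc ε ^ 4 * (1 + ‖x‖) ^ 4 = (ε * (1 + ‖x‖)) ^ 3 * (ε * (1 + ‖x‖)) := by ring
        _ ≤ (s + ‖x‖ + ε) ^ 3 * (‖x‖ + ε) :=
          mul_le_mul h3 key2 (by positivity) (by positivity)
    have hd1 : (0:ℝ) < ε ^ 4 * (1 + ‖x‖) ^ 4 := by positivity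
    have h1 : F ‖x‖ ≤ 1 / (ε ^ 4 * (1 + ‖x‖) ^ 4) :=
      one_div_le_one_div_of_le hd1 hden
    have h2 : (1:ℝ) / (ε ^ 4 * (1 + ‖x‖) ^ 4) = (ε ^ 4)⁻¹ * (1 + ‖x‖) ^ (-(4:ℝ)) := by
      rw [show ((1:ℝ) + ‖x‖) ^ (-(4:ℝ)) = (((1:ℝ) + ‖x‖) ^ (4:ℕ))⁻¹ by
        rw [← Real.rpow_natCast ((1:ℝ) + ‖x‖) 4, ← Real.rpow_neg (by positivity)]
        norm_num]
      rw [one_div, mul_inv]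
    rw [Real.norm_of_nonneg (hnonneg x)]
    rw [h2] at h1
    exact h1
  have hg_int : Integrable (fun x : EuclideanSpace ℝ (Fin 3) => F ‖x‖) volume :=
    hmaj.mono' hg_cont.aestronglyMeasurable (Filter.Eventually.of_forall hbound)
  have step1 : (∫ x in Metric.closedBall (0 : EuclideanSpace ℝ (Fin 3)) 1, F ‖x‖)
      ≤ ∫ x : EuclideanSpace ℝ (Fin 3), F ‖x‖ :=
    setIntegral_le_integral hg_int (Filter.Eventually.of_forall hnonneg)
  have step2 := MeasureTheory.integral_fun_norm_addHaar
    (volume : Measure (EuclideanSpace ℝ (Fin 3))) F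
  simp only [finrank_euclideanSpace, Fintype.card_fin, smul_eq_mul, nsmul_eq_mul,
    Nat.cast_ofNat] at step2
  obtain ⟨hint2, hval2⟩ := integral_Ioi_inv_sq_shift haε
  have step3 : (∫ y in Ioi (0:ℝ), y ^ 2 * F y) ≤ (s + ε)⁻¹ := by
    rw [← hval2]
    refine integral_mono_of_nonneg ?_ hint2 ?_
    · filter_upwards [ae_restrict_mem measurableSet_Ioi] with y hy
      have hy0 : (0:ℝ) < y := hy
      have h1 : (0:ℝ) < s + y + ε := by linarith
      have h2 : (0:ℝ) < y + ε := by linarith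
      have hF0 : 0 ≤ F y := le_of_lt (div_pos one_pos (mul_pos (pow_pos h1 3) h2))
      positivity
    · filter_upwards [ae_restrict_mem measurableSet_Ioi] with y hy
      have hy0 : (0:ℝ) < y := hy
      have h1 : (0:ℝ) < s + y + ε := by linarith
      have h2 : (0:ℝ) < y + ε := by linarith
      have hD : (0:ℝ) < (s + y + ε) ^ 3 * (y + ε) := mul_pos (pow_pos h1 3) h2
      have hsq : (0:ℝ) < (s + ε + y) ^ 2 := by positivity
      have he : y ^ 2 * F y = y ^ 2 / ((s + y + ε) ^ 3 * (y + ε)) := by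
        rw [hFdef]; ring
      rw [he, ← one_div ((s + ε + y) ^ 2), div_le_div_iff₀ hD hsq]
      have key : y ^ 2 ≤ (s + y + ε) * (y + ε) := by nlinarith
      nlinarith [key, sq_nonneg (s + y + ε), mul_nonneg (sq_nonneg (s + y + ε))
        (sub_nonneg.mpr key)]
  calc (∫ x in Metric.closedBall (0 : EuclideanSpace ℝ (Fin 3)) 1, F ‖x‖)
      ≤ ∫ x : EuclideanSpace ℝ (Fin 3), F ‖x‖ := step1
    _ ≤ 3 * V3 * (s + ε)⁻¹ := by
        rw [step2, V3, measureReal_def, show (3 - 1 : ℕ) = 2 from rfl]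
        set V := (volume (Metric.ball (0 : EuclideanSpace ℝ (Fin 3)) 1)).toReal with hV
        have hV0 : 0 ≤ V := ENNReal.toReal_nonneg
        nlinarith [mul_le_mul_of_nonneg_left step3 hV0]

lemma timeInt (ε : ℝ) (hε : 0 < ε) (hε1 : ε ≤ 1) :
    (∫ t in (-ε ^ 2)..1,
        (∫ x in Metric.closedBall (0 : EuclideanSpace ℝ (Fin 3)) 1,
          1 / ((Real.sqrt |t| + ‖x‖ + ε) ^ 3 * (‖x‖ + ε))))
      ≤ 9 * V3 := by
  set J : ℝ → ℝ := fun t => ∫ x in Metric.closedBall (0 : EuclideanSpace ℝ (Fin 3)) 1,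
      1 / ((Real.sqrt |t| + ‖x‖ + ε) ^ 3 * (‖x‖ + ε)) with hJdef
  set M : ℝ → ℝ := fun t => 3 * V3 * (Real.sqrt |t| + ε)⁻¹ with hMdef
  have hC0 : (0:ℝ) ≤ 3 * V3 := le_of_lt (mul_pos (by norm_num) V3_pos)
  show (∫ t in (-ε ^ 2)..1, J t) ≤ 9 * V3
  have hMc : Continuous M := by
    rw [hMdef]
    refine continuous_const.mul (Continuous.inv₀ ?_ ?_)
    · exact (Real.continuous_sqrt.comp continuous_abs).add continuous_const
    · intro t
      have := Real.sqrt_nonneg |t|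
      exact ne_of_gt (by linarith)
  have hJ0 : ∀ t, 0 ≤ J t := by
    intro t
    refine setIntegral_nonneg measurableSet_closedBall fun x _ => ?_
    have h1 : (0:ℝ) < Real.sqrt |t| + ‖x‖ + ε := by
      have := Real.sqrt_nonneg |t|; have := norm_nonneg x; linarith
    have h2 : (0:ℝ) < ‖x‖ + ε := by have := norm_nonneg x; linarith
    exact le_of_lt (div_pos one_pos (mul_pos (pow_pos h1 3) h2))
  have hJM : ∀ t, J t ≤ M t := fun t =>
    spatial (Real.sqrt |t|) ε (Real.sqrt_nonneg _) hε hε1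
  have hab : (-ε ^ 2 : ℝ) ≤ 1 := by nlinarith
  have hab0 : (-ε ^ 2 : ℝ) ≤ 0 := neg_nonpos.mpr (sq_nonneg ε)
  have hMint1 : IntervalIntegrable M volume (-ε ^ 2) 0 := hMc.intervalIntegrable _ _
  have hMint2 : IntervalIntegrable M volume 0 1 := hMc.intervalIntegrable _ _
  have hMint : IntervalIntegrable M volume (-ε ^ 2) 1 := hMc.intervalIntegrable _ _
  have main1 : (∫ t in (-ε ^ 2)..1, J t) ≤ ∫ t in (-ε ^ 2)..1, M t := by
    rw [intervalIntegral.integral_of_le hab, intervalIntegral.integral_of_le hab]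
    exact integral_mono_of_nonneg (Filter.Eventually.of_forall hJ0) hMint.1
      (Filter.Eventually.of_forall hJM)
  have split : (∫ t in (-ε ^ 2)..1, M t)
      = (∫ t in (-ε ^ 2)..0, M t) + ∫ t in (0:ℝ)..1, M t :=
    (intervalIntegral.integral_add_adjacent_intervals hMint1 hMint2).symm
  have hA : (∫ t in (-ε ^ 2)..0, M t) ≤ 3 * V3 * ε := by
    have h1 : (∫ t in (-ε ^ 2)..0, M t) ≤ ∫ t in (-ε ^ 2)..0, (3 * V3 * ε⁻¹) := by
      refine intervalIntegral.integral_mono_on hab0 hMint1 intervalIntegrable_const ?_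
      intro t _
      refine mul_le_mul_of_nonneg_left ?_ hC0
      refine inv_anti₀ hε ?_
      have := Real.sqrt_nonneg |t|; linarith
    rw [intervalIntegral.integral_const] at h1
    have h2 : (0 - (-ε ^ 2)) • (3 * V3 * ε⁻¹) = 3 * V3 * ε := by
      rw [smul_eq_mul]
      field_simp
      ring
    rw [h2] at h1
    exact h1
  have hB : (∫ t in (0:ℝ)..1, M t) ≤ 3 * V3 * 2 := by
    have hrint : IntervalIntegrable (fun t : ℝ => 3 * V3 * t ^ (-(1/2):ℝ)) volume 0 1 :=
      (intervalIntegral.intervalIntegrable_rpow' (by norm_num)).const_mul (3 * V3)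
    have hne : ∀ᵐ t : ℝ, t ≠ 0 := by
      have hset : ({0} : Set ℝ) = {t : ℝ | ¬ t ≠ 0} := by ext; simp
      rw [ae_iff, ← hset]
      exact Real.volume_singleton
    have hle : ∀ᵐ t ∂(volume.restrict (Icc (0:ℝ) 1)), M t ≤ 3 * V3 * t ^ (-(1/2):ℝ) := by
      filter_upwards [ae_restrict_mem measurableSet_Icc, ae_restrict_of_ae hne]
        with t htI htne
      have ht0 : 0 < t := lt_of_le_of_ne htI.1 (Ne.symm htne)
      have habs : |t| = t := abs_of_pos ht0
      have hsq : 0 < Real.sqrt t := Real.sqrt_pos.mpr ht0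
      have h1 : (Real.sqrt |t| + ε)⁻¹ ≤ (Real.sqrt t)⁻¹ := by
        rw [habs]
        exact inv_anti₀ hsq (by linarith)
      have h2 : (Real.sqrt t)⁻¹ = t ^ (-(1/2):ℝ) := by
        rw [Real.sqrt_eq_rpow, ← Real.rpow_neg ht0.le]
      calc M t = 3 * V3 * (Real.sqrt |t| + ε)⁻¹ := rfl
        _ ≤ 3 * V3 * (Real.sqrt t)⁻¹ := mul_le_mul_of_nonneg_left h1 hC0
        _ = 3 * V3 * t ^ (-(1/2):ℝ) := by rw [h2]
    have h3 : (∫ t in (0:ℝ)..1, M t) ≤ ∫ t in (0:ℝ)..1, 3 * V3 * t ^ (-(1/2):ℝ) :=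
      intervalIntegral.integral_mono_ae_restrict zero_le_one hMint2 hrint hle
    have h4 : (∫ t in (0:ℝ)..1, 3 * V3 * t ^ (-(1/2):ℝ)) = 3 * V3 * 2 := by
      rw [intervalIntegral.integral_const_mul, integral_rpow (Or.inl (by norm_num))]
      norm_num
    rw [h4] at h3
    exact h3
  calc (∫ t in (-ε ^ 2)..1, J t) ≤ ∫ t in (-ε ^ 2)..1, M t := main1
    _ = (∫ t in (-ε ^ 2)..0, M t) + ∫ t in (0:ℝ)..1, M t := split
    _ ≤ 3 * V3 * ε + 3 * V3 * 2 := add_le_add hA hB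
    _ ≤ 9 * V3 := by nlinarith [V3_pos]

/-- Spatial integral bound `∫_{‖x‖≤1} (|t|^{1/2}+‖x‖+ε)^{-3}(‖x‖+ε)^{-1} dx
≤ C (|t|^{1/2}+ε)^{-1}`, and its consequence after integration in time. -/
theorem stmt8 :
    ∃ C : ℝ, 0 < C ∧
      ((∀ ε : ℝ, 0 < ε → ε ≤ 1 → ∀ t : ℝ, 0 < |t| → |t| ≤ 1 →
        (∫ x in Metric.closedBall (0 : EuclideanSpace ℝ (Fin 3)) 1,
            1 / ((Real.sqrt |t| + ‖x‖ + ε) ^ 3 * (‖x‖ + ε)))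
          ≤ C * (Real.sqrt |t| + ε)⁻¹) ∧
      ∃ C' : ℝ, 0 < C' ∧ ∀ ε : ℝ, 0 < ε → ε ≤ 1 →
        (∫ t in (-ε ^ 2)..1,
            (∫ x in Metric.closedBall (0 : EuclideanSpace ℝ (Fin 3)) 1,
              1 / ((Real.sqrt |t| + ‖x‖ + ε) ^ 3 * (‖x‖ + ε))))
          ≤ C') := by
  refine ⟨3 * V3, mul_pos (by norm_num) V3_pos, ?_, 9 * V3,
    mul_pos (by norm_num) V3_pos, ?_⟩
  · intro ε hε hε1 t _ _
    exact spatial (Real.sqrt |t|) ε (Real.sqrt_nonneg _) hε hε1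
  · intro ε hε hε1
    exact timeInt ε hε hε1
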